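/- arXiv:1608.06705 — 2 statements merged into one kernel-verified Lean document; each statement's English description precedes it below -/
import Mathlib

section
/- The Siegel function g_v(τ) has neither zeros nor poles on the upper half-plane: for every v ∈ ℚ² \ ℤ² and every τ with Im(τ) > 0, g_v(τ) ≠ 0. -/
noncomputable section

open Complex

/-- `e(z) = exp(2πiz)`. -/
def ec (z : ℂ) : ℂ := Complex.exp (2 * Real.pi * Complex.I * z)

/-- The Weierstrass ℘-function of the lattice `ℤτ + ℤ`. -/
def wp (τ z : ℂ) : ℂ :=
  z⁻¹ ^ 2 + ∑' p : ℤ × ℤ,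
    if p = 0 then 0
    else ((z - ((p.1 : ℂ) * τ + (p.2 : ℂ)))⁻¹ ^ 2 - ((p.1 : ℂ) * τ + (p.2 : ℂ))⁻¹ ^ 2)

/-- The lattice invariant `g₂` of `ℤτ + ℤ`. -/
def g2 (τ : ℂ) : ℂ := 60 * ∑' p : ℤ × ℤ, if p = 0 then 0 else ((p.1 : ℂ) * τ + (p.2 : ℂ))⁻¹ ^ 4

/-- The lattice invariant `g₃` of `ℤτ + ℤ`. -/
def g3 (τ : ℂ) : ℂ := 140 * ∑' p : ℤ × ℤ, if p = 0 then 0 else ((p.1 : ℂ) * τ + (p.2 : ℂ))⁻¹ ^ 6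

/-- The discriminant `Δ = g₂³ − 27 g₃²`. -/
def disc (τ : ℂ) : ℂ := g2 τ ^ 3 - 27 * g3 τ ^ 2

/-- The modular `j`-invariant `j = 1728 g₂³/Δ`. -/
def jInv (τ : ℂ) : ℂ := 1728 * g2 τ ^ 3 / disc τ

/-- The (first) Fricke function `f_v(τ) = (g₂g₃/Δ)·℘(r₁τ + r₂)`. -/
def fricke (v : ℚ × ℚ) (τ : ℂ) : ℂ :=
  g2 τ * g3 τ / disc τ * wp τ ((v.1 : ℂ) * τ + (v.2 : ℂ))

/-- `q^r = exp(2πirτ)` for rational exponents `r`. -/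
def qpow (τ : ℂ) (r : ℚ) : ℂ := Complex.exp (2 * Real.pi * Complex.I * (r : ℂ) * τ)

/-- The Siegel function `g_v(τ)`. -/
def siegel (v : ℚ × ℚ) (τ : ℂ) : ℂ :=
  -Complex.exp (Real.pi * Complex.I * (v.2 : ℂ) * ((v.1 : ℂ) - 1)) *
    qpow τ ((1/2) * (v.1 ^ 2 - v.1 + 1/6)) *
    (1 - qpow τ v.1 * ec (v.2 : ℂ)) *
    ∏' n : ℕ,
      ((1 - qpow τ ((n : ℚ) + 1 + v.1) * ec (v.2 : ℂ)) *
       (1 - qpow τ ((n : ℚ) + 1 - v.1) * ec (-(v.2 : ℂ))))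

/-- A rational number is integral if it is (the image of) an integer. -/
def IsIntegralRat (r : ℚ) : Prop := ∃ n : ℤ, r = n

/-- `u ≡ v (mod ℤ²)`. -/
def CongModZ2 (u v : ℚ × ℚ) : Prop := IsIntegralRat (u.1 - v.1) ∧ IsIntegralRat (u.2 - v.2)

lemma qpow_mul_ec (τ : ℂ) (r s : ℚ) :
    qpow τ r * ec (s : ℂ) = Complex.exp (2 * Real.pi * Complex.I * ((r : ℂ) * τ + (s : ℂ))) := by
  rw [qpow, ec, ← Complex.exp_add]
  ring_nf

lemma norm_qpow_mul_ec {τ : ℂ} (r s : ℚ) :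
    ‖qpow τ r * ec (s : ℂ)‖ = Real.exp (-(2 * Real.pi * (r : ℝ) * τ.im)) := by
  rw [qpow_mul_ec, Complex.norm_exp]
  congr 1
  simp [Complex.mul_re, Complex.mul_im, Complex.add_im, Complex.add_re]
  ring

lemma factor_ne_zero {τ : ℂ} (hτ : 0 < τ.im) {r s : ℚ}
    (h : ¬(r = 0 ∧ IsIntegralRat s)) : 1 - qpow τ r * ec (s : ℂ) ≠ 0 := by
  rw [sub_ne_zero]
  intro heq
  rw [qpow_mul_ec, eq_comm, Complex.exp_eq_one_iff] at heq
  obtain ⟨n, hn⟩ := heq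
  have h2 : (2 * (Real.pi : ℂ) * Complex.I) ≠ 0 := by
    simp [Real.pi_ne_zero, Complex.I_ne_zero]
  have hn' : (r : ℂ) * τ + (s : ℂ) = (n : ℂ) := by
    have : 2 * (Real.pi : ℂ) * Complex.I * ((r : ℂ) * τ + (s : ℂ)) =
        2 * (Real.pi : ℂ) * Complex.I * (n : ℂ) := by rw [hn]; ring
    exact mul_left_cancel₀ h2 this
  have him : (r : ℝ) * τ.im = 0 := by
    have := congrArg Complex.im hn'
    simpa [Complex.mul_im, Complex.add_im] using this
  have hr : r = 0 := by
    rcases mul_eq_zero.mp him with h' | h'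
    · exact_mod_cast h'
    · exact absurd h' hτ.ne'
  apply h
  refine ⟨hr, n, ?_⟩
  have : (s : ℂ) = (n : ℂ) := by
    rw [hr] at hn'; simpa using hn'
  exact_mod_cast this

lemma summable_log_factor {τ : ℂ} (hτ : 0 < τ.im) (r s : ℚ) :
    Summable (fun n : ℕ => Complex.log (1 - qpow τ ((n : ℚ) + 1 + r) * ec (s : ℂ))) := by
  set t : ℝ := Real.exp (-(2 * Real.pi * τ.im)) with ht
  set c : ℝ := Real.exp (-(2 * Real.pi * ((1 : ℝ) + (r : ℝ)) * τ.im)) with hc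
  have ht1 : t < 1 := by
    rw [ht, Real.exp_lt_one_iff]
    have := Real.pi_pos
    nlinarith
  have ht0 : 0 ≤ t := Real.exp_nonneg _
  have hnorm : ∀ n : ℕ, ‖qpow τ ((n : ℚ) + 1 + r) * ec (s : ℂ)‖ = c * t ^ n := by
    intro n
    rw [norm_qpow_mul_ec, hc, ht, ← Real.exp_nat_mul, ← Real.exp_add]
    congr 1
    push_cast
    ring
  have htend : Filter.Tendsto (fun n : ℕ => c * t ^ n) Filter.atTop (nhds 0) := by
    simpa using (tendsto_pow_atTop_nhds_zero_of_lt_one ht0 ht1).const_mul c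
  have hev : ∀ᶠ n : ℕ in Filter.atTop,
      ‖Complex.log (1 - qpow τ ((n : ℚ) + 1 + r) * ec (s : ℂ))‖ ≤ 3 / 2 * (c * t ^ n) := by
    filter_upwards [htend.eventually_le_const (by norm_num : (0 : ℝ) < 1 / 2)] with n hn
    have hb : ‖-(qpow τ ((n : ℚ) + 1 + r) * ec (s : ℂ))‖ ≤ 1 / 2 := by
      rw [norm_neg]
      calc ‖qpow τ ((n : ℚ) + 1 + r) * ec (s : ℂ)‖ = c * t ^ n := hnorm n
        _ ≤ 1 / 2 := hn
    have := Complex.norm_log_one_add_half_le_self hb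
    rw [norm_neg] at this
    calc ‖Complex.log (1 - qpow τ ((n : ℚ) + 1 + r) * ec (s : ℂ))‖
        = ‖Complex.log (1 + -(qpow τ ((n : ℚ) + 1 + r) * ec (s : ℂ)))‖ := by
          rw [sub_eq_add_neg]
      _ ≤ 3 / 2 * ‖qpow τ ((n : ℚ) + 1 + r) * ec (s : ℂ)‖ := this
      _ = 3 / 2 * (c * t ^ n) := by rw [hnorm n]
  exact Summable.of_norm_bounded_eventually_nat
    (((summable_geometric_of_lt_one ht0 ht1).mul_left c).mul_left (3 / 2))
    hev

lemma tprod_factor_ne_zero {τ : ℂ} (hτ : 0 < τ.im) {r s : ℚ}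
    (hfn : ∀ n : ℕ, (1 - qpow τ ((n : ℚ) + 1 + r) * ec (s : ℂ)) ≠ 0) :
    (∏' n : ℕ, (1 - qpow τ ((n : ℚ) + 1 + r) * ec (s : ℂ))) ≠ 0 ∧
      Multipliable (fun n : ℕ => 1 - qpow τ ((n : ℚ) + 1 + r) * ec (s : ℂ)) := by
  have hsum : ∀ _ : Unit, Summable fun n : ℕ =>
      Complex.log ((fun (n : ℕ) (_ : Unit) => 1 - qpow τ ((n : ℚ) + 1 + r) * ec (s : ℂ)) n ()) :=
    fun _ => summable_log_factor hτ r s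
  have hfn' : ∀ (_ : Unit) (n : ℕ),
      (fun (n : ℕ) (_ : Unit) => 1 - qpow τ ((n : ℚ) + 1 + r) * ec (s : ℂ)) n () ≠ 0 :=
    fun _ n => hfn n
  constructor
  · rw [← Complex.cexp_tsum_eq_tprod hfn (summable_log_factor hτ r s)]
    exact Complex.exp_ne_zero _
  · exact Complex.multipliable_of_summable_log (summable_log_factor hτ r s)

/-- the Siegel function has neither zeros nor poles on the upper half-plane:
for every `v ∈ ℚ² ∖ ℤ²` and every `τ` with `Im τ > 0`, `g_v(τ) ≠ 0`. -/
theorem siegel_ne_zero (v : ℚ × ℚ)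
    (hv : ¬(IsIntegralRat v.1 ∧ IsIntegralRat v.2)) :
    ∀ τ : ℂ, 0 < τ.im → siegel v τ ≠ 0 := by
  intro τ hτ
  rw [siegel]
  -- the two families of tail factors
  have hfn1 : ∀ n : ℕ, (1 - qpow τ ((n : ℚ) + 1 + v.1) * ec ((v.2 : ℚ) : ℂ)) ≠ 0 := by
    intro n
    apply factor_ne_zero hτ
    rintro ⟨h1, h2⟩
    apply hv
    refine ⟨⟨-((n : ℤ) + 1), ?_⟩, h2⟩
    have : v.1 = -((n : ℚ) + 1) := by linarith [h1]
    rw [this]; push_cast; ring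
  have hfn2 : ∀ n : ℕ, (1 - qpow τ ((n : ℚ) + 1 + (-v.1)) * ec ((-v.2 : ℚ) : ℂ)) ≠ 0 := by
    intro n
    apply factor_ne_zero hτ
    rintro ⟨h1, m, h2⟩
    apply hv
    refine ⟨⟨(n : ℤ) + 1, ?_⟩, ⟨-m, ?_⟩⟩
    · have : v.1 = (n : ℚ) + 1 := by linarith [h1]
      rw [this]; push_cast; ring
    · have : v.2 = -(m : ℚ) := by linarith [h2]
      rw [this]; push_cast; ring
  obtain ⟨hne1, hm1⟩ := tprod_factor_ne_zero hτ hfn1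
  obtain ⟨hne2, hm2⟩ := tprod_factor_ne_zero hτ hfn2
  have hprod : (∏' n : ℕ,
      ((1 - qpow τ ((n : ℚ) + 1 + v.1) * ec (v.2 : ℂ)) *
       (1 - qpow τ ((n : ℚ) + 1 - v.1) * ec (-(v.2 : ℂ))))) ≠ 0 := by
    have hcast : ∀ n : ℕ,
        ((1 - qpow τ ((n : ℚ) + 1 + v.1) * ec (v.2 : ℂ)) *
         (1 - qpow τ ((n : ℚ) + 1 - v.1) * ec (-(v.2 : ℂ)))) =
        ((1 - qpow τ ((n : ℚ) + 1 + v.1) * ec ((v.2 : ℚ) : ℂ)) *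
         (1 - qpow τ ((n : ℚ) + 1 + (-v.1)) * ec ((-v.2 : ℚ) : ℂ))) := by
      intro n
      have e1 : ((n : ℚ) + 1 - v.1) = ((n : ℚ) + 1 + (-v.1)) := by ring
      have e2 : (-(v.2 : ℂ)) = ((-v.2 : ℚ) : ℂ) := by push_cast; ring
      rw [e1, e2]
    rw [tprod_congr hcast, hm1.tprod_mul hm2]
    exact mul_ne_zero hne1 hne2
  have hfirst : (1 - qpow τ v.1 * ec (v.2 : ℂ)) ≠ 0 := by
    apply factor_ne_zero hτ
    rintro ⟨h1, h2⟩
    exact hv ⟨⟨0, by rw [h1]; norm_num⟩, h2⟩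
  exact mul_ne_zero (mul_ne_zero (mul_ne_zero
    (neg_ne_zero.mpr (Complex.exp_ne_zero _)) (Complex.exp_ne_zero _)) hfirst) hprod
end
end

section
/- Suppose N > 1 is an integer with N ∉ {2, 3, 4, 6} and gcd(72, N) ∈ {2, 3, 4, 6, 12, 18, 24, 36}. Then there exists an integer t with gcd(N, t) = 1 and t ≢ ±1 (mod N) such that, writing N₊ and N₋ for the denominators of (t+1)/N and (t−1)/N in lowest terms, there exist prime factors p₊ and p₋ of N (not necessarily distinct) with gcd(p₊, N₊) = 1 and gcd(p₋, N₋) = 1. -/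
lemma aux_den (N : ℕ) (hN : N ≠ 0) (p : ℕ) (hp : p.Prime) (a : ℤ)
    (h : (p : ℤ) ^ (N.factorization p) ∣ a) :
    Nat.Coprime p ((a : ℚ) / (N : ℚ)).den := by
  rcases eq_or_ne a 0 with rfl | ha
  · simp [Nat.coprime_one_right]
  set q : ℚ := (a : ℚ) / (N : ℚ) with hq
  have hNQ : (N : ℚ) ≠ 0 := by exact_mod_cast hN
  have h1 : (a : ℚ) = q * N := by rw [hq, div_mul_cancel₀ _ hNQ]
  have hden : ((q.den : ℚ)) ≠ 0 := by exact_mod_cast q.den_nz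
  have h2 : q * q.den = (q.num : ℚ) := by
    nth_rewrite 1 [← Rat.num_div_den q]
    rw [div_mul_cancel₀ _ hden]
  have key : a * (q.den : ℤ) = q.num * N := by
    have : ((a * q.den : ℤ) : ℚ) = ((q.num * N : ℤ) : ℚ) := by
      push_cast
      rw [h1, ← h2]; ring
    exact_mod_cast this
  rw [hp.coprime_iff_not_dvd]
  intro hpd
  have hnum : ¬ (p : ℤ) ∣ q.num := by
    intro hd
    have h1 : p ∣ q.num.natAbs := by simpa using Int.natAbs_dvd_natAbs.mpr hd
    have := Nat.dvd_one.mp (q.reduced ▸ Nat.dvd_gcd h1 hpd)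
    have := hp.two_le; omega
  have hk1 : (p : ℤ) ^ (N.factorization p + 1) ∣ q.num * N := by
    rw [← key, pow_succ]
    exact mul_dvd_mul h (Int.natCast_dvd_natCast.mpr hpd)
  have hkN : (p : ℤ) ^ (N.factorization p + 1) ∣ (N : ℤ) :=
    (Nat.prime_iff_prime_int.mp hp).pow_dvd_of_dvd_mul_left _ hnum hk1
  have hkN' : p ^ (N.factorization p + 1) ∣ N := by exact_mod_cast hkN
  have := (Nat.Prime.pow_dvd_iff_le_factorization hp hN).mp hkN'
  omega

/-- Lemma 4.4: if `N > 1`, `N ∉ {2,3,4,6}` and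
`gcd(72, N) ∈ {2,3,4,6,12,18,24,36}`, then there is an integer `t` with `gcd(N, t) = 1`,
`t ≢ ±1 (mod N)`, and prime factors `p₊, p₋` of `N` with `gcd(p₊, N₊) = gcd(p₋, N₋) = 1`,
where `N₊, N₋` are the denominators of `(t+1)/N, (t−1)/N` in lowest terms. -/
theorem stmt7 (N : ℕ) (hN : 1 < N) (hN' : N ∉ ({2, 3, 4, 6} : Set ℕ))
    (hgcd : Nat.gcd 72 N ∈ ({2, 3, 4, 6, 12, 18, 24, 36} : Set ℕ)) :
    ∃ t : ℤ, Int.gcd (N : ℤ) t = 1 ∧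
      ¬(t ≡ 1 [ZMOD (N : ℤ)]) ∧ ¬(t ≡ -1 [ZMOD (N : ℤ)]) ∧
      (∃ p : ℕ, p.Prime ∧ p ∣ N ∧ Nat.Coprime p (((t : ℚ) + 1) / (N : ℚ)).den) ∧
      (∃ p : ℕ, p.Prime ∧ p ∣ N ∧ Nat.Coprime p (((t : ℚ) - 1) / (N : ℚ)).den) := by
  have hN0 : N ≠ 0 := by omega
  simp only [Set.mem_insert_iff, Set.mem_singleton_iff] at hN' hgcd
  push_neg at hN'
  obtain ⟨hN2, hN3, hN4, hN6⟩ := hN'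
  -- Step 1: N has an odd prime factor
  have hodd : ∃ p, p.Prime ∧ p ∣ N ∧ p ≠ 2 := by
    by_contra hco
    push_neg at hco
    have h3 : ¬ (3 ∣ N) := fun h => by have := hco 3 (by norm_num) h; omega
    have h2 : 2 ∣ N := by
      have hp := N.minFac_prime (by omega)
      have hd := N.minFac_dvd
      rw [← hco _ hp hd]; exact hd
    obtain ⟨m, hm⟩ := h2
    have hm0 : m ≠ 0 := by rintro rfl; omega
    have hm1 : m ≠ 1 := by rintro rfl; omega
    have h2m : 2 ∣ m := by
      have hp := m.minFac_prime hm1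
      have hd : m.minFac ∣ N := (m.minFac_dvd).trans ⟨2, by rw [hm]; ring⟩
      rw [← hco _ hp hd]; exact m.minFac_dvd
    obtain ⟨j, hj⟩ := h2m
    have hj0 : j ≠ 0 := by rintro rfl; omega
    have hj1 : j ≠ 1 := by rintro rfl; omega
    have h2j : 2 ∣ j := by
      have hp := j.minFac_prime hj1
      have hd : j.minFac ∣ N := (j.minFac_dvd).trans ⟨4, by rw [hm, hj]; ring⟩
      rw [← hco _ hp hd]; exact j.minFac_dvd
    obtain ⟨i, hi⟩ := h2j
    have h8 : 8 ∣ N := ⟨i, by rw [hm, hj, hi]; ring⟩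
    have h8g : 8 ∣ Nat.gcd 72 N := Nat.dvd_gcd (by norm_num) h8
    have h3g : ¬ 3 ∣ Nat.gcd 72 N := fun h => h3 (h.trans (Nat.gcd_dvd_right _ _))
    rcases hgcd with h|h|h|h|h|h|h|h <;> rw [h] at h8g h3g <;> omega
  obtain ⟨p, hp, hpN, hp2⟩ := hodd
  set k := N.factorization p with hkdef
  set P := p ^ k with hPdef
  set M := N / P with hMdef
  have hPdvd : P ∣ N := Nat.ordProj_dvd N p
  have hPM : P * M = N := Nat.ordProj_mul_ordCompl_eq_self N p
  have hP0 : P ≠ 0 := pow_ne_zero _ hp.pos.ne'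
  have hM0 : M ≠ 0 := by rintro h; rw [h] at hPM; omega
  have hcoPM : Nat.Coprime P M := (Nat.coprime_ordCompl hp hN0).pow_left _
  have hpodd : ¬ 2 ∣ P := by
    intro h2P
    exact hp2 ((Nat.prime_dvd_prime_iff_eq Nat.prime_two hp).mp
      (Nat.prime_two.dvd_of_dvd_pow h2P)).symm
  have hk1 : 1 ≤ k := (hp.factorization_pos_of_dvd hN0 hpN)
  have hp3 : 3 ≤ p := by have := hp.two_le; omega
  have hP3 : 3 ≤ P := le_trans hp3 (Nat.le_self_pow (by omega) p)
  clear_value k P M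
  by_cases hM3 : 3 ≤ M
  · -- main case: t ≡ -1 mod P, t ≡ 1 mod M
    obtain ⟨t, htP, htM⟩ := Nat.chineseRemainder hcoPM (P - 1) 1
    have hPt : (P : ℤ) ∣ (t : ℤ) + 1 := by
      have h1 : (P : ℤ) ∣ ((P - 1 : ℕ) : ℤ) - (t : ℤ) :=
        (Int.natCast_modEq_iff.mpr htP).dvd
      have h2 : ((P - 1 : ℕ) : ℤ) = (P : ℤ) - 1 := by
        push_cast [Nat.cast_sub (by omega : 1 ≤ P)]; ring
      rw [h2] at h1
      have h3 := dvd_sub (dvd_refl (P : ℤ)) h1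
      have h4 : (P : ℤ) - ((P : ℤ) - 1 - (t : ℤ)) = (t : ℤ) + 1 := by ring
      rwa [h4] at h3
    have hMt : (M : ℤ) ∣ (t : ℤ) - 1 := by
      have h1 : (M : ℤ) ∣ ((1 : ℕ) : ℤ) - (t : ℤ) := (Int.natCast_modEq_iff.mpr htM).dvd
      have := dvd_neg.mpr h1
      simpa [neg_sub] using this
    have hNcast : (N : ℤ) = (P : ℤ) * (M : ℤ) := by exact_mod_cast hPM.symm
    refine ⟨(t : ℤ), ?_, ?_, ?_, ?_, ?_⟩
    · rw [← Int.isCoprime_iff_gcd_eq_one, hNcast]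
      obtain ⟨c, hc⟩ := hPt
      obtain ⟨d, hd⟩ := hMt
      have hcP : IsCoprime (P : ℤ) (t : ℤ) := by
        have : (t : ℤ) = -1 + (P : ℤ) * c := by omega
        rw [this]
        exact (isCoprime_one_right.neg_right).add_mul_left_right c
      have hcM : IsCoprime (M : ℤ) (t : ℤ) := by
        have : (t : ℤ) = 1 + (M : ℤ) * d := by omega
        rw [this]
        exact isCoprime_one_right.add_mul_left_right d
      exact hcP.mul_left hcM
    · intro hmod
      have h1 : (N : ℤ) ∣ 1 - (t : ℤ) := hmod.dvd
      have h2 : (P : ℤ) ∣ 1 - (t : ℤ) := dvd_trans (by exact_mod_cast hPdvd) h1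
      have h3 : (P : ℤ) ∣ (2 : ℤ) := by
        have h4 := dvd_add h2 hPt
        rwa [show (1 - (t:ℤ)) + ((t:ℤ) + 1) = 2 by ring] at h4
      have : (P : ℕ) ∣ 2 := by exact_mod_cast h3
      have := Nat.le_of_dvd (by norm_num) this
      omega
    · intro hmod
      have h1 : (N : ℤ) ∣ -1 - (t : ℤ) := hmod.dvd
      have h2 : (M : ℤ) ∣ -1 - (t : ℤ) :=
        dvd_trans (by exact_mod_cast (⟨P, by rw [← hPM]; ring⟩ : M ∣ N)) h1
      have h3 : (M : ℤ) ∣ (2 : ℤ) := by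
        have h4 := dvd_add h2 hMt
        rw [show (-1 - (t:ℤ)) + ((t:ℤ) - 1) = -2 by ring] at h4
        exact (dvd_neg.mp (by rwa [show (-2:ℤ) = -(2) by ring] at h4))
      have : (M : ℕ) ∣ 2 := by exact_mod_cast h3
      have := Nat.le_of_dvd (by norm_num) this
      omega
    · refine ⟨p, hp, hpN, ?_⟩
      have := aux_den N hN0 p hp ((t : ℤ) + 1) (by
        rw [← hkdef]
        have h := hPt
        rw [hPdef] at h
        exact_mod_cast h)
      convert this using 2
      push_cast; ring
    · set q := M.minFac with hqdef
      have hq : q.Prime := M.minFac_prime (by omega)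
      have hqM : q ∣ M := M.minFac_dvd
      have hqN : q ∣ N := hqM.trans ⟨P, by rw [← hPM]; ring⟩
      refine ⟨q, hq, hqN, ?_⟩
      have hqP : ¬ q ∣ P := fun h =>
        hq.one_lt.ne' (Nat.dvd_one.mp (hcoPM ▸ Nat.dvd_gcd h hqM))
      have hfq : N.factorization q = M.factorization q := by
        rw [← hPM, Nat.factorization_mul hP0 hM0]
        simp [Nat.factorization_eq_zero_of_not_dvd hqP]
      have hdvd : (q : ℤ) ^ (N.factorization q) ∣ (t : ℤ) - 1 := by
        rw [hfq]
        exact dvd_trans (by exact_mod_cast Nat.ordProj_dvd M q) hMt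
      have := aux_den N hN0 q hq ((t : ℤ) - 1) hdvd
      convert this using 2
      push_cast; ring
  · have hM12 : M = 1 ∨ M = 2 := by omega
    rcases hM12 with hM1 | hM2
    · -- M = 1 : impossible
      exfalso
      have hNP : N = P := by rw [← hPM, hM1, mul_one]
      have h2N : ¬ 2 ∣ N := hNP ▸ hpodd
      have hg3 : Nat.gcd 72 N = 3 := by
        rcases hgcd with h|h|h|h|h|h|h|h <;>
          first
            | exact h
            | exact absurd ((show (2:ℕ) ∣ Nat.gcd 72 N by omega).trans
                (Nat.gcd_dvd_right 72 N)) h2N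
      have h3N : 3 ∣ N := hg3 ▸ Nat.gcd_dvd_right 72 N
      have h3p : 3 ∣ p := by
        have h3P : 3 ∣ P := hNP ▸ h3N
        rw [hPdef] at h3P
        exact Nat.Prime.dvd_of_dvd_pow (by norm_num) h3P
      have hp3' : p = 3 := ((Nat.prime_dvd_prime_iff_eq (by norm_num) hp).mp h3p).symm
      have hk2 : 2 ≤ k := by
        by_contra hcon
        have hk : k = 1 := by omega
        exact hN3 (by rw [hNP, hPdef, hk, pow_one, hp3'])
      have h9 : 9 ∣ N := by
        rw [hNP, hPdef, hp3']
        exact (show (9:ℕ) = 3 ^ 2 by norm_num) ▸ pow_dvd_pow 3 hk2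
      have h9g : 9 ∣ Nat.gcd 72 N := Nat.dvd_gcd (by norm_num) h9
      rw [hg3] at h9g
      omega
    · -- M = 2
      have hN2P : N = P * 2 := by rw [← hPM, hM2]
      have hP5 : 5 ≤ P := by
        have hP3' : P ≠ 3 := by
          rintro h
          exact hN6 (by rw [hN2P, h])
        omega
      have hco2P : Nat.Coprime 2 P := (Nat.prime_two.coprime_iff_not_dvd).mpr hpodd
      obtain ⟨t, ht2, htP⟩ := Nat.chineseRemainder hco2P 1 2
      have h2t : (2 : ℤ) ∣ (t : ℤ) - 1 := by
        have h1 := (Int.natCast_modEq_iff.mpr ht2).dvd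
        have h2 : ((1:ℕ):ℤ) = 1 := by norm_num
        rw [h2] at h1
        omega
      have hPt : (P : ℤ) ∣ (t : ℤ) - 2 := by
        have h1 := (Int.natCast_modEq_iff.mpr htP).dvd
        have h2 : ((2:ℕ):ℤ) = 2 := by norm_num
        rw [h2] at h1
        have h3 := dvd_neg.mpr h1
        simpa [neg_sub] using h3
      have hNcast : (N : ℤ) = (P : ℤ) * 2 := by exact_mod_cast hN2P
      have h2dvdN : (2:ℕ) ∣ N := ⟨P, by rw [hN2P]; ring⟩
      refine ⟨(t : ℤ), ?_, ?_, ?_, ?_, ?_⟩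
      · obtain ⟨c, hc⟩ := h2t
        obtain ⟨d, hd⟩ := hPt
        have hc2 : IsCoprime (2:ℤ) (t:ℤ) := by
          have ht : (t:ℤ) = 1 + 2 * c := by omega
          rw [ht]
          exact isCoprime_one_right.add_mul_left_right c
        have hcP : IsCoprime (P:ℤ) (t:ℤ) := by
          have ht : (t:ℤ) = 2 + (P:ℤ) * d := by omega
          rw [ht]
          have hP2 : IsCoprime (P:ℤ) (2:ℤ) := by
            have := Nat.isCoprime_iff_coprime.mpr hco2P.symm
            exact_mod_cast this
          exact hP2.add_mul_left_right d
        rw [← Int.isCoprime_iff_gcd_eq_one, hNcast]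
        exact IsCoprime.mul_left hcP hc2
      · intro hmod
        have h1 : (P : ℤ) ∣ 1 - (t:ℤ) := dvd_trans (by exact_mod_cast hPdvd) hmod.dvd
        have h4 := dvd_add h1 hPt
        rw [show (1 - (t:ℤ)) + ((t:ℤ) - 2) = -1 by ring] at h4
        have h5 : (P:ℤ) ∣ 1 := dvd_neg.mp (by rwa [show (-1:ℤ) = -(1) by ring] at h4)
        have h6 : (P:ℕ) ∣ 1 := by exact_mod_cast h5
        have := Nat.le_of_dvd (by norm_num) h6
        omega
      · intro hmod
        have h1 : (P : ℤ) ∣ -1 - (t:ℤ) := dvd_trans (by exact_mod_cast hPdvd) hmod.dvd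
        have h4 := dvd_add h1 hPt
        rw [show (-1 - (t:ℤ)) + ((t:ℤ) - 2) = -3 by ring] at h4
        have h5 : (P:ℤ) ∣ 3 := dvd_neg.mp (by rwa [show (-3:ℤ) = -(3) by ring] at h4)
        have h6 : (P:ℕ) ∣ 3 := by exact_mod_cast h5
        have := Nat.le_of_dvd (by norm_num) h6
        omega
      · refine ⟨2, Nat.prime_two, h2dvdN, ?_⟩
        have hf2 : N.factorization 2 = 1 := by
          rw [hN2P, Nat.factorization_mul hP0 (by norm_num)]
          simp [Nat.factorization_eq_zero_of_not_dvd hpodd,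
            Nat.Prime.factorization_self Nat.prime_two]
        have hdvd : (2:ℤ) ^ (N.factorization 2) ∣ (t:ℤ) + 1 := by
          rw [hf2, pow_one]; omega
        have := aux_den N hN0 2 Nat.prime_two ((t : ℤ) + 1) hdvd
        convert this using 2
        push_cast; ring
      · refine ⟨2, Nat.prime_two, h2dvdN, ?_⟩
        have hf2 : N.factorization 2 = 1 := by
          rw [hN2P, Nat.factorization_mul hP0 (by norm_num)]
          simp [Nat.factorization_eq_zero_of_not_dvd hpodd,
            Nat.Prime.factorization_self Nat.prime_two]
        have hdvd : (2:ℤ) ^ (N.factorization 2) ∣ (t:ℤ) - 1 := by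
          rw [hf2, pow_one]; omega
        have := aux_den N hN0 2 Nat.prime_two ((t : ℤ) - 1) hdvd
        convert this using 2
        push_cast; ring
end
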